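/- Consider the subset ℛ = {(ζ, ξ) ∈ ℂ × ℝ : ζ = e^{ir}, ξ = e^{r}·sin(2r) for some real r ≥ 0} of ℂ × ℝ ≅ ℝ³. Then for each w ∈ ℂ × ℝ there exist two elements ω₁, ω₂ ∈ ℛ and a real number χ > 0 such that ω₁ − ω₂ = χ·w. In particular, every unit vector of ℝ³ is a unit secant of ℛ: sec(ℛ) = S². -/

import Mathlib

open Real

private lemma num_sum (t : ℝ) : 2 ≤ Real.exp t + Real.exp (-t) := by
  have h3 : Real.exp t * Real.exp (-t) = 1 := by rw [← Real.exp_add]; simp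
  nlinarith [Real.exp_pos t, Real.exp_pos (-t), sq_nonneg (Real.exp t - Real.exp (-t))]

private lemma num_pe1 : (5/2:ℝ) ≤ Real.exp (π/2) := by
  have h := Real.add_one_le_exp (π/2)
  have h3 : (3:ℝ) ≤ π := Real.pi_gt_three.le
  linarith

private lemma num_pe2 : Real.exp (-(π/2)) ≤ 2/5 := by
  have hm : Real.exp (π/2) * Real.exp (-(π/2)) = 1 := by rw [← Real.exp_add]; simp
  have h := num_pe1
  nlinarith [Real.exp_pos (-(π/2))]

private lemma num_e11 : (361/64:ℝ) ≤ Real.exp (11*π/12) := by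
  have h := Real.add_one_le_exp (11*π/24)
  have h3 : (3:ℝ) ≤ π := Real.pi_gt_three.le
  have hsq : Real.exp (11*π/12) = Real.exp (11*π/24)^2 := by
    rw [sq, ← Real.exp_add]; ring_nf
  rw [hsq]; nlinarith

private lemma num_e11m : Real.exp (-(11*π/12)) ≤ 64/361 := by
  have hm : Real.exp (11*π/12) * Real.exp (-(11*π/12)) = 1 := by rw [← Real.exp_add]; simp
  have h := num_e11
  nlinarith [Real.exp_pos (-(11*π/12))]

private lemma num_s2ub : Real.sqrt 2 ≤ 3/2 := by
  nlinarith [Real.sq_sqrt (by norm_num : (0:ℝ) ≤ 2), Real.sqrt_nonneg 2]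

private lemma num_s3lb : (433/250:ℝ) ≤ Real.sqrt 3 := by
  nlinarith [Real.sq_sqrt (by norm_num : (0:ℝ) ≤ 3), Real.sqrt_nonneg 3]

private lemma num_s3ub : Real.sqrt 3 ≤ 7/4 := by
  nlinarith [Real.sq_sqrt (by norm_num : (0:ℝ) ≤ 3), Real.sqrt_nonneg 3]

-- sign lemma for f(π/4) when B ≥ 7/10
private lemma sgn1 (E e1 e2 s2 c B : ℝ) (hE0 : 0 < E) (hE : 4*(|c|+1) ≤ E)
    (hsum : 2 ≤ e1 + e2) (hs2n : 0 ≤ s2) (hs2ub : s2 ≤ 3/2) (hB : 7/10 ≤ B) :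
    0 ≤ E * e1 * B + E * e2 * B - s2 * c := by
  have h1 : c ≤ |c| := le_abs_self c
  have h2 : -|c| ≤ c := neg_abs_le c
  have h3 : 0 ≤ |c| := abs_nonneg c
  nlinarith [mul_le_mul_of_nonneg_left
      (mul_le_mul_of_nonneg_left hsum (by linarith : (0:ℝ) ≤ B)) hE0.le,
    mul_nonneg hs2n h3]

-- sign lemma for f(3π/4) when B ≥ 7/10
private lemma sgn2 (E e1 e2 s2 c B : ℝ) (hE0 : 0 < E) (hE : 4*(|c|+1) ≤ E)
    (hsum : 2 ≤ e1 + e2) (hs2n : 0 ≤ s2) (hs2ub : s2 ≤ 3/2) (hB : 7/10 ≤ B) :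
    -(E * e1 * B) - E * e2 * B - s2 * c ≤ 0 := by
  have h1 : c ≤ |c| := le_abs_self c
  have h2 : -|c| ≤ c := neg_abs_le c
  have h3 : 0 ≤ |c| := abs_nonneg c
  nlinarith [mul_le_mul_of_nonneg_left
      (mul_le_mul_of_nonneg_left hsum (by linarith : (0:ℝ) ≤ B)) hE0.le,
    mul_nonneg hs2n h3]

-- sign lemma for f(π/2) when A ≥ 7/10
private lemma sgn3 (E g1 g2 c A : ℝ) (hE0 : 0 < E) (hE : 4*(|c|+1) ≤ E)
    (hg1 : 5/2 ≤ g1) (hg2 : g2 ≤ 2/5) (hg2p : 0 < g2) (hA : 7/10 ≤ A) (hA1 : A ≤ 1) :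
    -(E * g1 * A) + E * g2 * A - 2*c ≤ 0 := by
  have h1 : c ≤ |c| := le_abs_self c
  have h2 : -|c| ≤ c := neg_abs_le c
  have h3 : 0 ≤ |c| := abs_nonneg c
  have t1 : (5/2:ℝ)*(7/10) ≤ g1*A := by nlinarith
  have t2 : g2*A ≤ (2/5:ℝ)*1 := by nlinarith
  nlinarith [mul_le_mul_of_nonneg_left t1 hE0.le, mul_le_mul_of_nonneg_left t2 hE0.le]

-- sign lemma for f(11π/12) when A ≥ 7/10, |B| ≤ 7/10
private lemma sgn4 (E g1 g2 s3 s11 c A B : ℝ) (hE0 : 0 < E) (hE : 4*(|c|+1) ≤ E)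
    (hg1 : 361/64 ≤ g1) (hg2 : g2 ≤ 64/361) (hg2p : 0 < g2)
    (hs3 : 433/250 ≤ s3) (hs3' : s3 ≤ 7/4)
    (hs11 : 0 < s11) (hs11' : s11 ≤ 1)
    (hA : 7/10 ≤ A) (hA1 : A ≤ 1) (hB : -(7/10) ≤ B) (hB' : B ≤ 7/10) :
    0 ≤ E * g1 * (A*(s3/2) - B*(1/2)) - E * g2 * (A*(s3/2) + B*(1/2)) - 2*c*s11 := by
  have h1 : c ≤ |c| := le_abs_self c
  have h2 : -|c| ≤ c := neg_abs_le c
  have h3 : 0 ≤ |c| := abs_nonneg c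
  have hbr1 : (1:ℝ)/4 ≤ A*(s3/2) - B*(1/2) := by nlinarith
  have hbr2 : A*(s3/2) + B*(1/2) ≤ 3/2 := by nlinarith
  have t1 : (361/64:ℝ)*(1/4) ≤ g1*(A*(s3/2) - B*(1/2)) := by nlinarith
  have t2 : g2*(A*(s3/2) + B*(1/2)) ≤ (64/361:ℝ)*(3/2) := by nlinarith
  have t3 : c*s11 ≤ |c| := by nlinarith
  nlinarith [mul_le_mul_of_nonneg_left t1 hE0.le, mul_le_mul_of_nonneg_left t2 hE0.le]

private lemma numAB (A B : ℝ) (hAB : A^2 + B^2 = 1) (hB : |B| ≤ 7/10) : 7/10 ≤ |A| := by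
  have h1 := sq_abs A
  have h2 := sq_abs B
  have h3 := abs_nonneg A
  have h4 := abs_nonneg B
  nlinarith

private lemma ivt0 {f : ℝ → ℝ} (hf : Continuous f) {a b : ℝ} (hab : a ≤ b)
    (h : (f a ≤ 0 ∧ 0 ≤ f b) ∨ (f b ≤ 0 ∧ 0 ≤ f a)) :
    ∃ δ ∈ Set.Icc a b, f δ = 0 := by
  rcases h with ⟨h1, h2⟩ | ⟨h1, h2⟩
  · obtain ⟨δ, hδ, hf0⟩ := intermediate_value_Icc hab hf.continuousOn ⟨h1, h2⟩
    exact ⟨δ, hδ, hf0⟩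
  · obtain ⟨δ, hδ, hf0⟩ := intermediate_value_Icc' hab hf.continuousOn ⟨h1, h2⟩
    exact ⟨δ, hδ, hf0⟩

set_option maxHeartbeats 1000000

/-- The curve `ℛ = {(e^{ir}, e^r sin 2r) : r ≥ 0} ⊆ ℂ × ℝ ≅ ℝ³` has every direction as a
secant: for each `w ∈ ℂ × ℝ` there are `ω₁, ω₂ ∈ ℛ` and `χ > 0` with `ω₁ − ω₂ = χ • w`;
in particular `sec(ℛ) = S²`. -/
theorem secants_of_R_fill_sphere
    (R : Set (ℂ × ℝ))
    (hR : R = {p : ℂ × ℝ | ∃ t : ℝ, 0 ≤ t ∧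
      p = (Complex.exp ((t : ℂ) * Complex.I), Real.exp t * Real.sin (2 * t))}) :
    ∀ w : ℂ × ℝ, ∃ ω₁ ∈ R, ∃ ω₂ ∈ R, ∃ χ : ℝ, 0 < χ ∧ ω₁ - ω₂ = χ • w := by
  subst hR
  rintro ⟨z, x⟩
  have hπ := Real.pi_pos
  have hπ3 : (3:ℝ) ≤ π := Real.pi_gt_three.le
  by_cases hz : z = 0
  · subst hz
    rcases eq_or_ne x 0 with hx | hx
    · subst hx
      exact ⟨_, ⟨0, le_refl 0, rfl⟩, _, ⟨0, le_refl 0, rfl⟩, 1, one_pos, by simp; rfl⟩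
    · rcases hx.lt_or_gt with hxneg | hxpos
      · refine ⟨_, ⟨3*π/4 + 2*π, by positivity, rfl⟩, _, ⟨3*π/4, by positivity, rfl⟩,
          (Real.exp (3*π/4) - Real.exp (3*π/4 + 2*π))/x, ?_, ?_⟩
        · have h1 : Real.exp (3*π/4) < Real.exp (3*π/4 + 2*π) := by
            apply Real.exp_lt_exp.2; linarith
          have : Real.exp (3*π/4) - Real.exp (3*π/4 + 2*π) < 0 := by linarith
          exact div_pos_of_neg_of_neg this hxneg
        · have hsin1 : Real.sin (2*(3*π/4 + 2*π)) = -1 := by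
            rw [show 2*(3*π/4 + 2*π) = 3*π/2 + (2:ℤ)*(2*π) by push_cast; ring,
              Real.sin_add_int_mul_two_pi,
              show (3:ℝ)*π/2 = π + π/2 by ring, Real.sin_add_pi_div_two, Real.cos_pi]
          have hsin2 : Real.sin (2*(3*π/4)) = -1 := by
            rw [show 2*(3*π/4) = π + π/2 by ring, Real.sin_add_pi_div_two, Real.cos_pi]
          have hC : Complex.exp ((((3*π/4 + 2*π : ℝ)):ℂ) * Complex.I)
              - Complex.exp ((((3*π/4 : ℝ)):ℂ) * Complex.I) = 0 := by
            rw [show (((3*π/4 + 2*π : ℝ)):ℂ) * Complex.I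
                = (((3*π/4 : ℝ)):ℂ) * Complex.I + 2*(π:ℝ)*Complex.I by push_cast; ring,
              Complex.exp_add, Complex.exp_two_pi_mul_I, mul_one, sub_self]
          rw [Prod.mk_sub_mk, Prod.smul_mk, Complex.real_smul, smul_eq_mul, Prod.mk.injEq]
          constructor
          · rw [hC]; push_cast; ring
          · rw [hsin1, hsin2]; field_simp; ring
      · refine ⟨_, ⟨π/4 + 2*π, by positivity, rfl⟩, _, ⟨π/4, by positivity, rfl⟩,
          (Real.exp (π/4 + 2*π) - Real.exp (π/4))/x, ?_, ?_⟩
        · have h1 : Real.exp (π/4) < Real.exp (π/4 + 2*π) := by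
            apply Real.exp_lt_exp.2; linarith
          exact div_pos (by linarith) hxpos
        · have hsin1 : Real.sin (2*(π/4 + 2*π)) = 1 := by
            rw [show 2*(π/4 + 2*π) = π/2 + (2:ℤ)*(2*π) by push_cast; ring,
              Real.sin_add_int_mul_two_pi, Real.sin_pi_div_two]
          have hsin2 : Real.sin (2*(π/4)) = 1 := by
            rw [show 2*(π/4) = π/2 by ring, Real.sin_pi_div_two]
          have hC : Complex.exp ((((π/4 + 2*π : ℝ)):ℂ) * Complex.I)
              - Complex.exp ((((π/4 : ℝ)):ℂ) * Complex.I) = 0 := by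
            rw [show (((π/4 + 2*π : ℝ)):ℂ) * Complex.I
                = (((π/4 : ℝ)):ℂ) * Complex.I + 2*(π:ℝ)*Complex.I by push_cast; ring,
              Complex.exp_add, Complex.exp_two_pi_mul_I, mul_one, sub_self]
          rw [Prod.mk_sub_mk, Prod.smul_mk, Complex.real_smul, smul_eq_mul, Prod.mk.injEq]
          constructor
          · rw [hC]; push_cast; ring
          · rw [hsin1, hsin2]; field_simp
  · -- z ≠ 0 : the generic case.
    have hr0 : 0 < ‖z‖ := norm_pos_iff.mpr hz
    set r := ‖z‖ with hrdef
    set a := Complex.arg z with hadef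
    set c := x / r with hcdef
    set μ₀ := a - π/2 with hμ₀
    obtain ⟨k, hk⟩ := exists_nat_ge ((max (Real.log (4*(|c|+1))) π - μ₀)/(2*π))
    set μ := μ₀ + 2*π*k with hμdef
    have hμT : max (Real.log (4*(|c|+1))) π ≤ μ := by
      rw [div_le_iff₀ (by positivity)] at hk
      rw [hμdef]; linarith [hk]
    have hμπ : π ≤ μ := le_trans (le_max_right _ _) hμT
    have hE : 4*(|c|+1) ≤ Real.exp μ := by
      have h1 : Real.log (4*(|c|+1)) ≤ μ := le_trans (le_max_left _ _) hμT
      calc 4*(|c|+1) = Real.exp (Real.log (4*(|c|+1))) := (Real.exp_log (by positivity)).symm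
        _ ≤ Real.exp μ := Real.exp_le_exp.2 h1
    set f : ℝ → ℝ := fun δ =>
      Real.exp (μ+δ) * Real.sin (2*(μ+δ)) - Real.exp (μ-δ) * Real.sin (2*(μ-δ))
        - 2*c*Real.sin δ with hfdef
    suffices H : ∃ δ : ℝ, 0 < δ ∧ δ < π ∧ f δ = 0 by
      obtain ⟨δ, hδ0, hδπ, hfδ⟩ := H
      have hs := Real.sin_pos_of_pos_of_lt_pi hδ0 hδπ
      refine ⟨(Complex.exp (((μ+δ:ℝ):ℂ) * Complex.I), Real.exp (μ+δ) * Real.sin (2*(μ+δ))),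
        ⟨μ+δ, by linarith, rfl⟩,
        (Complex.exp (((μ-δ:ℝ):ℂ) * Complex.I), Real.exp (μ-δ) * Real.sin (2*(μ-δ))),
        ⟨μ-δ, by linarith, rfl⟩,
        2*Real.sin δ / r, div_pos (by linarith) hr0, ?_⟩
      have hkey : ∀ d : ℝ, Complex.exp (((μ + d:ℝ):ℂ)*Complex.I)
          = Complex.exp ((a:ℂ)*Complex.I) * Complex.exp (((d - π/2:ℝ):ℂ)*Complex.I) := by
        intro d
        rw [show ((μ + d:ℝ):ℂ)*Complex.I
            = (a:ℂ)*Complex.I + ((d - π/2:ℝ):ℂ)*Complex.I + ((k:ℤ):ℂ)*(2*(π:ℝ)*Complex.I) by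
          push_cast [hμdef, hμ₀]; ring]
        rw [Complex.exp_add, Complex.exp_add, Complex.exp_int_mul_two_pi_mul_I, mul_one]
      have hC : Complex.exp (((μ+δ:ℝ):ℂ)*Complex.I) - Complex.exp (((μ-δ:ℝ):ℂ)*Complex.I)
          = ((2*Real.sin δ / r : ℝ):ℂ) * z := by
        rw [show μ - δ = μ + (-δ) by ring, hkey δ, hkey (-δ), ← mul_sub]
        have hd : Complex.exp (((δ - π/2:ℝ):ℂ)*Complex.I)
            - Complex.exp (((-δ - π/2:ℝ):ℂ)*Complex.I) = 2*(Real.sin δ:ℂ) := by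
          rw [Complex.exp_mul_I, Complex.exp_mul_I, ← Complex.ofReal_cos, ← Complex.ofReal_sin,
            ← Complex.ofReal_cos, ← Complex.ofReal_sin,
            Real.cos_sub_pi_div_two, Real.sin_sub_pi_div_two,
            show -δ - π/2 = (-δ) - π/2 by ring, Real.cos_sub_pi_div_two,
            Real.sin_sub_pi_div_two, Real.sin_neg, Real.cos_neg]
          push_cast; ring
        rw [hd]
        have hz' : (r:ℂ) * Complex.exp ((a:ℂ)*Complex.I) = z := Complex.norm_mul_exp_arg_mul_I z
        have hrC : (r:ℂ) ≠ 0 := by exact_mod_cast hr0.ne'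
        rw [← hz']
        push_cast
        field_simp
      have hX : Real.exp (μ+δ) * Real.sin (2*(μ+δ)) - Real.exp (μ-δ) * Real.sin (2*(μ-δ))
          = (2*Real.sin δ / r) * x := by
        have h0 : Real.exp (μ+δ) * Real.sin (2*(μ+δ)) - Real.exp (μ-δ) * Real.sin (2*(μ-δ))
            - 2*c*Real.sin δ = 0 := hfδ
        rw [hcdef] at h0
        have h1 : 2*(x/r)*Real.sin δ = (2*Real.sin δ / r) * x := by ring
        linarith [h0, h1.le, h1.ge]
      rw [Prod.mk_sub_mk, Prod.smul_mk, Complex.real_smul, smul_eq_mul, Prod.mk.injEq]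
      exact ⟨hC, hX⟩
    -- Now find a zero of `f` in `(0, π)` by the intermediate value theorem.
    have hfc : Continuous f := by rw [hfdef]; fun_prop
    have hsp : ∀ d : ℝ, Real.sin (2*(μ+d)) = Real.sin (2*μ₀ + 2*d) := by
      intro d
      rw [show 2*(μ+d) = (2*μ₀ + 2*d) + ((2*k:ℤ)) * (2*π) by rw [hμdef]; push_cast; ring,
        Real.sin_add_int_mul_two_pi]
    have hsm : ∀ d : ℝ, Real.sin (2*(μ-d)) = Real.sin (2*μ₀ - 2*d) := by
      intro d
      rw [show 2*(μ-d) = (2*μ₀ - 2*d) + ((2*k:ℤ)) * (2*π) by rw [hμdef]; push_cast; ring,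
        Real.sin_add_int_mul_two_pi]
    set A := Real.sin (2*μ₀) with hA
    set B := Real.cos (2*μ₀) with hB
    set E := Real.exp μ with hEdef
    have hE0 : 0 < E := by rw [hEdef]; exact Real.exp_pos μ
    have hep : ∀ d : ℝ, Real.exp (μ + d) = E * Real.exp d := by
      intro d; rw [hEdef, Real.exp_add]
    have hem : ∀ d : ℝ, Real.exp (μ - d) = E * Real.exp (-d) := by
      intro d; rw [hEdef, show μ - d = μ + (-d) by ring, Real.exp_add]
    have hv1 : f (π/4) = E * Real.exp (π/4) * B + E * Real.exp (-(π/4)) * B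
        - Real.sqrt 2 * c := by
      simp only [hfdef]
      rw [hsp, hsm, show 2*μ₀ + 2*(π/4) = 2*μ₀ + π/2 by ring,
        show 2*μ₀ - 2*(π/4) = 2*μ₀ - π/2 by ring,
        Real.sin_add_pi_div_two, Real.sin_sub_pi_div_two, Real.sin_pi_div_four,
        hep, hem, ← hB]
      ring
    have hv2 : f (3*π/4) = -(E * Real.exp (3*π/4) * B) - E * Real.exp (-(3*π/4)) * B
        - Real.sqrt 2 * c := by
      simp only [hfdef]
      rw [hsp, hsm, show 2*μ₀ + 2*(3*π/4) = (2*μ₀ - π/2) + (1:ℤ)*(2*π) by push_cast; ring,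
        show 2*μ₀ - 2*(3*π/4) = (2*μ₀ + π/2) + (-1:ℤ)*(2*π) by push_cast; ring,
        Real.sin_add_int_mul_two_pi, Real.sin_add_int_mul_two_pi,
        Real.sin_add_pi_div_two, Real.sin_sub_pi_div_two,
        show (3:ℝ)*π/4 = π - π/4 by ring, Real.sin_pi_sub, Real.sin_pi_div_four,
        hep, hem, ← hB]
      ring
    have hv3 : f (π/2) = -(E * Real.exp (π/2) * A) + E * Real.exp (-(π/2)) * A - 2*c := by
      simp only [hfdef]
      rw [hsp, hsm, show 2*μ₀ + 2*(π/2) = 2*μ₀ + π by ring,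
        show 2*μ₀ - 2*(π/2) = 2*μ₀ - π by ring,
        Real.sin_add_pi, Real.sin_sub_pi, Real.sin_pi_div_two, hep, hem, ← hA]
      ring
    have hv4 : f (11*π/12) = E * Real.exp (11*π/12) * (A*(Real.sqrt 3/2) - B*(1/2))
        - E * Real.exp (-(11*π/12)) * (A*(Real.sqrt 3/2) + B*(1/2))
        - 2*c*Real.sin (11*π/12) := by
      simp only [hfdef]
      rw [hsp, hsm, show 2*μ₀ + 2*(11*π/12) = (2*μ₀ - π/6) + (1:ℤ)*(2*π) by push_cast; ring,
        show 2*μ₀ - 2*(11*π/12) = (2*μ₀ + π/6) + (-1:ℤ)*(2*π) by push_cast; ring,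
        Real.sin_add_int_mul_two_pi, Real.sin_add_int_mul_two_pi,
        Real.sin_sub, Real.sin_add, Real.cos_pi_div_six, Real.sin_pi_div_six,
        hep, hem, ← hA, ← hB]
      try ring
    have hAB : A^2 + B^2 = 1 := Real.sin_sq_add_cos_sq (2*μ₀)
    have hA1 : A ≤ 1 := Real.sin_le_one _
    have hA1' : -1 ≤ A := Real.neg_one_le_sin _
    have hs11pos : 0 < Real.sin (11*π/12) :=
      Real.sin_pos_of_pos_of_lt_pi (by positivity) (by linarith)
    have hs11le : Real.sin (11*π/12) ≤ 1 := Real.sin_le_one _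
    have hEneg : ∀ c' : ℝ, c' = -c → 4*(|c'|+1) ≤ E := by
      intro c' h; rw [h, abs_neg]; exact hE
    rcases le_or_gt (7/10 : ℝ) |B| with hBbig | hBsmall
    · -- |B| ≥ 7/10 : work on [π/4, 3π/4]
      have hint : ∃ δ ∈ Set.Icc (π/4) (3*π/4), f δ = 0 := by
        apply ivt0 hfc (by linarith)
        rcases le_abs.1 hBbig with hBp | hBn
        · right
          refine ⟨?_, ?_⟩
          · rw [hv2]
            exact sgn2 E _ _ _ c B hE0 hE (num_sum _) (Real.sqrt_nonneg 2) num_s2ub hBp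
          · rw [hv1]
            exact sgn1 E _ _ _ c B hE0 hE (num_sum _) (Real.sqrt_nonneg 2) num_s2ub hBp
        · left
          refine ⟨?_, ?_⟩
          · rw [hv1]
            have h := sgn1 E (Real.exp (π/4)) (Real.exp (-(π/4))) (Real.sqrt 2) (-c) (-B)
              hE0 (hEneg _ rfl) (num_sum _) (Real.sqrt_nonneg 2) num_s2ub hBn
            linarith [h]
          · rw [hv2]
            have h := sgn2 E (Real.exp (3*π/4)) (Real.exp (-(3*π/4))) (Real.sqrt 2) (-c) (-B)
              hE0 (hEneg _ rfl) (num_sum _) (Real.sqrt_nonneg 2) num_s2ub hBn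
            linarith [h]
      obtain ⟨δ, ⟨h1, h2⟩, h3⟩ := hint
      exact ⟨δ, by linarith, by linarith, h3⟩
    · -- |B| < 7/10, hence |A| ≥ 7/10 : work on [π/2, 11π/12]
      have hBub := abs_le.1 hBsmall.le
      have hAbig : (7/10:ℝ) ≤ |A| := numAB A B hAB hBsmall.le
      have hint : ∃ δ ∈ Set.Icc (π/2) (11*π/12), f δ = 0 := by
        apply ivt0 hfc (by linarith)
        rcases le_abs.1 hAbig with hAp | hAn
        · left
          refine ⟨?_, ?_⟩
          · rw [hv3]
            exact sgn3 E _ _ c A hE0 hE num_pe1 num_pe2 (Real.exp_pos _) hAp hA1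
          · rw [hv4]
            exact sgn4 E _ _ _ _ c A B hE0 hE num_e11 num_e11m (Real.exp_pos _)
              num_s3lb num_s3ub hs11pos hs11le hAp hA1 hBub.1 hBub.2
        · right
          refine ⟨?_, ?_⟩
          · rw [hv4]
            have h := sgn4 E (Real.exp (11*π/12)) (Real.exp (-(11*π/12))) (Real.sqrt 3)
              (Real.sin (11*π/12)) (-c) (-A) (-B) hE0 (hEneg _ rfl) num_e11 num_e11m
              (Real.exp_pos _) num_s3lb num_s3ub hs11pos hs11le hAn (by linarith)
              (by linarith [hBub.2]) (by linarith [hBub.1])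
            linarith [h]
          · rw [hv3]
            have h := sgn3 E (Real.exp (π/2)) (Real.exp (-(π/2))) (-c) (-A)
              hE0 (hEneg _ rfl) num_pe1 num_pe2 (Real.exp_pos _) hAn (by linarith)
            linarith [h]
      obtain ⟨δ, ⟨h1, h2⟩, h3⟩ := hint
      exact ⟨δ, by linarith, by linarith, h3⟩
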